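/- Upper p₀-estimate: let 1 ≤ p₀ < ∞ and let p : ℕ → [1,∞] satisfy p(n) ≥ p₀ for every n. Then for any finite family x₁, …, x_n of bounded sequences with pairwise disjoint supports one has Φ_p(x₁ + ⋯ + x_n) ≤ (∑_{i=1}^n Φ_p(x_i)^{p₀})^{1/p₀}. -/

import Mathlib

open scoped ENNReal
open Finset

lemma bin_mink {r : ℝ} (hr : 1 ≤ r) {u v u' v' : ℝ} (hu : 0 ≤ u) (hv : 0 ≤ v)
    (hu' : 0 ≤ u') (hv' : 0 ≤ v') :
    ((u + u') ^ r + (v + v') ^ r) ^ (1 / r) ≤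
      (u ^ r + v ^ r) ^ (1 / r) + (u' ^ r + v' ^ r) ^ (1 / r) := by
  have h := Real.Lp_add_le_of_nonneg (s := (Finset.univ : Finset Bool))
    (f := fun b => if b then u else v) (g := fun b => if b then u' else v') hr
    (by intro i _; cases i <;> simpa) (by intro i _; cases i <;> simpa)
  simpa [Fintype.sum_bool] using h

lemma mink2 {r : ℝ} (hr : 1 ≤ r) {ι : Type*} (s : Finset ι) (f g : ι → ℝ)
    (hf : ∀ i, 0 ≤ f i) (hg : ∀ i, 0 ≤ g i) :
    ((∑ i ∈ s, f i) ^ r + (∑ i ∈ s, g i) ^ r) ^ (1 / r) ≤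
      ∑ i ∈ s, (f i ^ r + g i ^ r) ^ (1 / r) := by
  have hr0 : r ≠ 0 := by positivity
  classical
  induction s using Finset.induction with
  | empty => simp [Real.zero_rpow hr0, Real.zero_rpow (inv_ne_zero hr0)]
  | insert a s hx ih =>
      rw [Finset.sum_insert hx, Finset.sum_insert hx, Finset.sum_insert hx]
      calc ((f a + ∑ i ∈ s, f i) ^ r + (g a + ∑ i ∈ s, g i) ^ r) ^ (1 / r)
          ≤ (f a ^ r + g a ^ r) ^ (1/r) + ((∑ i ∈ s, f i) ^ r + (∑ i ∈ s, g i) ^ r) ^ (1/r) :=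
            bin_mink hr (hf a) (hg a) (Finset.sum_nonneg fun i _ => hf i)
              (Finset.sum_nonneg fun i _ => hg i)
        _ ≤ _ := by exact add_le_add_right ih _

/-- `t ⊞_p s`: for `p < ∞`, `(t^p + s^p)^(1/p)`; for `p = ∞`, `max t s`. -/
noncomputable def boxPlus (p : ℝ≥0∞) (t s : ℝ) : ℝ :=
  if p = ∞ then max t s else (t ^ p.toReal + s ^ p.toReal) ^ (1 / p.toReal)

/-- The recursively defined seminorms `|||x|||_(k)` (0-indexed). -/
noncomputable def seqNorm (p : ℕ → ℝ≥0∞) (x : ℕ → ℝ) : ℕ → ℝ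
  | 0 => boxPlus (p 0) |x 0| |x 1|
  | k + 1 => boxPlus (p (k + 1)) (seqNorm p x k) |x (k + 2)|

/-- `Φ_p(x) = lim_k |||x|||_(k)`, as the supremum of the nondecreasing sequence. -/
noncomputable def Phi (p : ℕ → ℝ≥0∞) (x : ℕ → ℝ) : ℝ≥0∞ :=
  ⨆ k, ENNReal.ofReal (seqNorm p x k)

/-- `x` is a bounded real sequence, i.e. `x ∈ ℓ^∞`. -/
def IsBddSeq (x : ℕ → ℝ) : Prop := ∃ M : ℝ, ∀ n, |x n| ≤ M

/-- Membership in the variable exponent space `ℓ^{p(·)}`. -/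
def MemVLp (p : ℕ → ℝ≥0∞) (x : ℕ → ℝ) : Prop := IsBddSeq x ∧ Phi p x < ⊤

lemma boxPlus_nonneg (p : ℝ≥0∞) {t s : ℝ} (ht : 0 ≤ t) (hs : 0 ≤ s) :
    0 ≤ boxPlus p t s := by
  unfold boxPlus
  split
  · exact le_max_of_le_left ht
  · positivity

lemma seqNorm_nonneg (p : ℕ → ℝ≥0∞) (x : ℕ → ℝ) : ∀ k, 0 ≤ seqNorm p x k
  | 0 => boxPlus_nonneg _ (abs_nonneg _) (abs_nonneg _)
  | k + 1 => boxPlus_nonneg _ (seqNorm_nonneg p x k) (abs_nonneg _)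

lemma key {q : ℝ≥0∞} {p₀ : ℝ} (hp₀ : 1 ≤ p₀) (hq : ENNReal.ofReal p₀ ≤ q)
    {ι : Type*} [Fintype ι] {a b : ι → ℝ} (ha : ∀ i, 0 ≤ a i) (hb : ∀ i, 0 ≤ b i)
    {A B : ℝ} (hA0 : 0 ≤ A) (hB0 : 0 ≤ B)
    (hA : A ≤ (∑ i, a i ^ p₀) ^ (1/p₀)) (hB : B ≤ (∑ i, b i ^ p₀) ^ (1/p₀)) :
    boxPlus q A B ≤ (∑ i, boxPlus q (a i) (b i) ^ p₀) ^ (1/p₀) := by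
  have hp₀0 : 0 < p₀ := lt_of_lt_of_le one_pos hp₀
  have hp₀ne : p₀ ≠ 0 := hp₀0.ne'
  by_cases hqT : q = ∞
  · simp only [boxPlus, hqT, if_pos rfl]
    have key1 : ∀ (c : ι → ℝ), (∀ i, 0 ≤ c i) → (∀ i, c i ≤ max (a i) (b i)) →
        (∑ i, c i ^ p₀) ^ (1/p₀) ≤ (∑ i, max (a i) (b i) ^ p₀) ^ (1/p₀) := by
      intro c hc hcm
      apply Real.rpow_le_rpow (Finset.sum_nonneg fun i _ => Real.rpow_nonneg (hc i) _)
        (Finset.sum_le_sum fun i _ => Real.rpow_le_rpow (hc i) (hcm i) hp₀0.le)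
        (by positivity)
    exact max_le (hA.trans (key1 a ha fun i => le_max_left _ _))
      (hB.trans (key1 b hb fun i => le_max_right _ _))
  · simp only [boxPlus, if_neg hqT]
    set Q := q.toReal with hQdef
    have hQ : p₀ ≤ Q := by
      rw [hQdef]
      rw [← ENNReal.ofReal_le_iff_le_toReal hqT] at *
      exact hq
    have hQ0 : 0 < Q := lt_of_lt_of_le hp₀0 hQ
    set r := Q / p₀ with hrdef
    have hr : 1 ≤ r := (one_le_div hp₀0).2 hQ
    have hr0 : 0 < r := lt_of_lt_of_le one_pos hr
    have hpow : ∀ X : ℝ, 0 ≤ X → (X ^ (1/Q)) ^ p₀ = X ^ (1/r) := by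
      intro X hX
      rw [← Real.rpow_mul hX, hrdef, one_div_div, one_div_mul_eq_div]
    have hXnn : ∀ i, (0:ℝ) ≤ a i ^ Q + b i ^ Q := fun i => by
      have := ha i; have := hb i; positivity
    have hunn : (0:ℝ) ≤ ∑ i, a i ^ p₀ := Finset.sum_nonneg fun i _ => Real.rpow_nonneg (ha i) _
    have hvnn : (0:ℝ) ≤ ∑ i, b i ^ p₀ := Finset.sum_nonneg fun i _ => Real.rpow_nonneg (hb i) _
    have hAQ : A ^ Q ≤ (∑ i, a i ^ p₀) ^ r := by
      calc A ^ Q ≤ ((∑ i, a i ^ p₀) ^ (1/p₀)) ^ Q := Real.rpow_le_rpow hA0 hA hQ0.le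
        _ = (∑ i, a i ^ p₀) ^ r := by
            rw [← Real.rpow_mul hunn, hrdef, one_div_mul_eq_div]
    have hBQ : B ^ Q ≤ (∑ i, b i ^ p₀) ^ r := by
      calc B ^ Q ≤ ((∑ i, b i ^ p₀) ^ (1/p₀)) ^ Q := Real.rpow_le_rpow hB0 hB hQ0.le
        _ = (∑ i, b i ^ p₀) ^ r := by
            rw [← Real.rpow_mul hvnn, hrdef, one_div_mul_eq_div]
    have hmink := mink2 hr (Finset.univ : Finset ι) (fun i => a i ^ p₀) (fun i => b i ^ p₀)
      (fun i => Real.rpow_nonneg (ha i) _) (fun i => Real.rpow_nonneg (hb i) _)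
    have hsum_eq : ∀ i, ((a i ^ p₀) ^ r + (b i ^ p₀) ^ r) ^ (1/r)
        = (a i ^ Q + b i ^ Q) ^ (1/r) := by
      intro i
      rw [← Real.rpow_mul (ha i), ← Real.rpow_mul (hb i), hrdef,
        mul_div_cancel₀ Q hp₀ne]
    have hABnn : (0:ℝ) ≤ A ^ Q + B ^ Q := by positivity
    calc (A ^ Q + B ^ Q) ^ (1/Q)
        = (((A ^ Q + B ^ Q) ^ (1/Q)) ^ p₀) ^ (1/p₀) := by
          rw [one_div p₀, Real.rpow_rpow_inv (Real.rpow_nonneg hABnn _) hp₀ne]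
      _ = ((A ^ Q + B ^ Q) ^ (1/r)) ^ (1/p₀) := by rw [hpow _ hABnn]
      _ ≤ (∑ i, (a i ^ Q + b i ^ Q) ^ (1/r)) ^ (1/p₀) := by
          apply Real.rpow_le_rpow (Real.rpow_nonneg hABnn _) _ (by positivity)
          calc (A ^ Q + B ^ Q) ^ (1/r)
              ≤ ((∑ i, a i ^ p₀) ^ r + (∑ i, b i ^ p₀) ^ r) ^ (1/r) :=
                Real.rpow_le_rpow hABnn (add_le_add hAQ hBQ) (by positivity)
            _ ≤ ∑ i, ((a i ^ p₀) ^ r + (b i ^ p₀) ^ r) ^ (1/r) := hmink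
            _ = ∑ i, (a i ^ Q + b i ^ Q) ^ (1/r) := Finset.sum_congr rfl fun i _ => hsum_eq i
      _ = (∑ i, ((a i ^ Q + b i ^ Q) ^ (1/Q)) ^ p₀) ^ (1/p₀) := by
          congr 1
          exact Finset.sum_congr rfl fun i _ => (hpow _ (hXnn i)).symm

lemma coord {p₀ : ℝ} (hp₀ : 1 ≤ p₀) {N : ℕ} (x : Fin N → ℕ → ℝ)
    (hdisj : ∀ i j, i ≠ j → ∀ m, x i m = 0 ∨ x j m = 0) (m : ℕ) :
    |∑ i, x i m| ≤ (∑ i, |x i m| ^ p₀) ^ (1/p₀) := by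
  have hp₀0 : 0 < p₀ := lt_of_lt_of_le one_pos hp₀
  have hp₀ne : p₀ ≠ 0 := hp₀0.ne'
  have h1 : |∑ i, x i m| ^ p₀ ≤ ∑ i, |x i m| ^ p₀ := by
    by_cases h : ∀ i, x i m = 0
    · rw [Finset.sum_eq_zero fun i _ => h i]
      simp only [abs_zero, Real.zero_rpow hp₀ne]
      exact Finset.sum_nonneg fun i _ => Real.rpow_nonneg (abs_nonneg _) _
    · push_neg at h
      obtain ⟨j, hj⟩ := h
      have hs : ∑ i, x i m = x j m :=
        Finset.sum_eq_single j
          (fun i _ hij => (hdisj i j hij m).resolve_right hj)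
          (fun h => absurd (Finset.mem_univ j) h)
      rw [hs]
      exact Finset.single_le_sum (f := fun i => |x i m| ^ p₀)
        (fun i _ => Real.rpow_nonneg (abs_nonneg _) _) (Finset.mem_univ j)
  calc |∑ i, x i m| = (|∑ i, x i m| ^ p₀) ^ (1/p₀) := by
        rw [one_div, Real.rpow_rpow_inv (abs_nonneg _) hp₀ne]
    _ ≤ (∑ i, |x i m| ^ p₀) ^ (1/p₀) :=
        Real.rpow_le_rpow (Real.rpow_nonneg (abs_nonneg _) _) h1 (by positivity)

/-- Upper `p₀`-estimate for disjointly supported vectors in `ℓ^{p(·)}`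
when `p(n) ≥ p₀` for all `n`. -/
theorem upper_estimate (p : ℕ → ℝ≥0∞) (p₀ : ℝ) (hp₀ : 1 ≤ p₀)
    (hp : ∀ m, ENNReal.ofReal p₀ ≤ p m)
    (N : ℕ) (x : Fin N → ℕ → ℝ) (hbdd : ∀ i, IsBddSeq (x i))
    (hdisj : ∀ i j, i ≠ j → ∀ m, x i m = 0 ∨ x j m = 0) :
    Phi p (fun m => ∑ i, x i m) ≤ (∑ i, Phi p (x i) ^ p₀) ^ (1 / p₀) := by
  have hp₀0 : 0 < p₀ := lt_of_lt_of_le one_pos hp₀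
  set y : ℕ → ℝ := fun m => ∑ i, x i m with hy
  have claim : ∀ k, seqNorm p y k ≤ (∑ i, seqNorm p (x i) k ^ p₀) ^ (1/p₀) := by
    intro k
    induction k with
    | zero =>
        show boxPlus (p 0) |y 0| |y 1| ≤ (∑ i, boxPlus (p 0) |x i 0| |x i 1| ^ p₀) ^ (1/p₀)
        exact key hp₀ (hp 0) (fun i => abs_nonneg _) (fun i => abs_nonneg _)
          (abs_nonneg _) (abs_nonneg _) (coord hp₀ x hdisj 0) (coord hp₀ x hdisj 1)
    | succ k ih =>
        show boxPlus (p (k+1)) (seqNorm p y k) |y (k+2)| ≤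
          (∑ i, boxPlus (p (k+1)) (seqNorm p (x i) k) |x i (k+2)| ^ p₀) ^ (1/p₀)
        exact key hp₀ (hp (k+1)) (fun i => seqNorm_nonneg p (x i) k)
          (fun i => abs_nonneg _) (seqNorm_nonneg p y k) (abs_nonneg _) ih
          (coord hp₀ x hdisj (k+2))
  rw [Phi]
  apply iSup_le
  intro k
  calc ENNReal.ofReal (seqNorm p y k)
      ≤ ENNReal.ofReal ((∑ i, seqNorm p (x i) k ^ p₀) ^ (1/p₀)) :=
        ENNReal.ofReal_le_ofReal (claim k)
    _ = (∑ i, ENNReal.ofReal (seqNorm p (x i) k) ^ p₀) ^ (1/p₀) := by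
        rw [← ENNReal.ofReal_rpow_of_nonneg
          (Finset.sum_nonneg fun i _ => Real.rpow_nonneg (seqNorm_nonneg p (x i) k) p₀)
          (by positivity : (0:ℝ) ≤ 1/p₀)]
        congr 1
        rw [ENNReal.ofReal_sum_of_nonneg
          (fun i _ => Real.rpow_nonneg (seqNorm_nonneg p (x i) k) _)]
        exact Finset.sum_congr rfl fun i _ =>
          (ENNReal.ofReal_rpow_of_nonneg (seqNorm_nonneg p (x i) k) hp₀0.le).symm
    _ ≤ (∑ i, Phi p (x i) ^ p₀) ^ (1/p₀) := by
        apply ENNReal.rpow_le_rpow _ (by positivity)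
        apply Finset.sum_le_sum
        intro i _
        exact ENNReal.rpow_le_rpow (le_iSup (fun k => ENNReal.ofReal (seqNorm p (x i) k)) k)
          hp₀0.le
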